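/- The following are equivalent: (i) identity of forces of mortality: H̃_j(t) = H_j(t) for all t ∈ 𝒥 and all j = 1,…,d; (ii) the constant-sum property: for every j = 1,…,d and every Borel set A ⊆ 𝒥, μ̃_j(A) = ∫_A (1 − B(s)) μ_j(ds), where B(s) = ∫_{[0,s)} S(u)^{-1} μ̃₀(du). (Condition (ii) is the integrated form of the statement that a_j(t) + B(t) = 1 for μ_j-almost all t ∈ 𝒥, where a_j(t) = P(T̃ = t, D̃ = j | T = t, D = j).) -/

import Mathlib

open MeasureTheory Set ENNReal

namespace IdForces


lemma key_tsub {a b x y : ℝ≥0∞} (hx : x ≠ ∞) (hy : y ≠ ∞)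
    (h : a + x = b + y) : a - b ≤ y - x := by
  rcases le_total x y with hxy | hxy
  · have h2 : x + a = x + (b + (y - x)) := by
      rw [add_comm x a, h]
      rw [add_comm x, add_assoc]
      congr 1
      exact (tsub_add_cancel_of_le hxy).symm
    have ha : a = b + (y - x) := (ENNReal.add_right_inj hx).1 h2
    rw [tsub_le_iff_right, add_comm]
    exact ha.le
  · have h2 : a + x ≤ b + x := h.le.trans (add_le_add_right hxy b)
    have hab : a ≤ b := by
      have h3 : a + x - x ≤ b + x - x := tsub_le_tsub h2 le_rfl
      simpa [ENNReal.add_sub_cancel_right hx] using h3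
    simp [tsub_eq_zero_iff_le.2 hab]

lemma tsub_sup_le_of_add_eq {a b x y : ℝ≥0∞} (hx : x ≠ ∞) (hy : y ≠ ∞)
    (h : a + x = b + y) : (a - b) ⊔ (b - a) ≤ (y - x) ⊔ (x - y) :=
  sup_le ((key_tsub hx hy h).trans le_sup_left)
    ((key_tsub hy hx h.symm).trans le_sup_right)

lemma gronwall_zero (κ : Measure ℝ) [IsFiniteMeasure κ] (f : ℝ → ℝ≥0∞) (hf : Measurable f)
    (C : ℝ≥0∞) (hC : C ≠ ∞) (s₀ : ℝ)
    (hfC : ∀ s ∈ Ioc (0:ℝ) s₀, f s ≤ C)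
    (h : ∀ s ∈ Ioc (0:ℝ) s₀, f s ≤ ∫⁻ u in Ioo 0 s, f u ∂κ) :
    ∀ s ∈ Ioc (0:ℝ) s₀, f s = 0 := by
  rcases le_or_gt s₀ 0 with h0 | h0
  · intro s hs; exact absurd (hs.1.trans_le hs.2) (not_lt.2 h0)
  set Z : Set ℝ := {t | t ∈ Icc (0:ℝ) s₀ ∧ ∀ s ∈ Ioc (0:ℝ) t, f s = 0} with hZdef
  have hZ0 : (0:ℝ) ∈ Z :=
    ⟨⟨le_refl 0, h0.le⟩, fun s hs => absurd (hs.1.trans_le hs.2) (lt_irrefl 0)⟩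
  have hZne : Z.Nonempty := ⟨0, hZ0⟩
  have hZbdd : BddAbove Z := ⟨s₀, fun t ht => ht.1.2⟩
  set c := sSup Z with hc
  have hc0 : 0 ≤ c := le_csSup hZbdd hZ0
  have hcs : c ≤ s₀ := csSup_le hZne (fun t ht => ht.1.2)
  have hlt : ∀ u : ℝ, 0 < u → u < c → f u = 0 := by
    intro u hu huc
    obtain ⟨t, htZ, hut⟩ := exists_lt_of_lt_csSup hZne huc
    exact htZ.2 u ⟨hu, hut.le⟩
  have hcZ : c ∈ Z := by
    refine ⟨⟨hc0, hcs⟩, fun s hs => ?_⟩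
    have hzero : (∫⁻ u in Ioo (0:ℝ) s, f u ∂κ) = 0 := by
      rw [setLIntegral_eq_zero_iff measurableSet_Ioo hf]
      exact Filter.Eventually.of_forall
        (fun x hx => hlt x hx.1 (hx.2.trans_le hs.2))
    have hs' := h s ⟨hs.1, hs.2.trans hcs⟩
    rw [hzero] at hs'
    exact le_antisymm hs' zero_le
  have hceq : c = s₀ := by
    by_contra hne
    have hclt : c < s₀ := lt_of_le_of_ne hcs hne
    have hIempty : (⋂ n : ℕ, Ioo c (c + 1/(n+1))) = ∅ := by
      ext x
      simp only [mem_iInter, mem_Ioo, mem_empty_iff_false, iff_false, not_forall]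
      by_contra hx
      push_neg at hx
      obtain ⟨n, hn⟩ := exists_nat_one_div_lt (sub_pos.2 (hx 0).1)
      exact absurd ((hx n).2) (not_lt.2 (by linarith [hn]))
    have htend : Filter.Tendsto (fun n : ℕ => κ (Ioo c (c + 1/(n+1)))) Filter.atTop
        (nhds 0) := by
      have := MeasureTheory.tendsto_measure_iInter_atTop
        (μ := κ) (s := fun n : ℕ => Ioo c (c + 1/(n+1)))
        (fun n => measurableSet_Ioo.nullMeasurableSet)
        (fun n m hnm => Ioo_subset_Ioo le_rfl (by
          have hcast : (n:ℝ) ≤ (m:ℝ) := Nat.cast_le.2 hnm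
          have : (1:ℝ)/(m+1) ≤ 1/(n+1) := by
            apply one_div_le_one_div_of_le <;> linarith
          linarith))
        ⟨0, measure_ne_top κ _⟩
      rwa [hIempty, measure_empty] at this
    have hev := htend.eventually_lt_const (by norm_num : (0:ℝ≥0∞) < 1/2)
    obtain ⟨n, hn⟩ := hev.exists
    set b := min (c + 1/(n+1)) s₀ with hb
    have hcb : c < b := lt_min (by
      have : (0:ℝ) < 1/(n+1) := by positivity
      linarith) hclt
    set M := ⨆ s ∈ Ioc c b, f s with hM
    have hMC : M ≤ C := iSup₂_le fun s hs => hfC s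
      ⟨hc0.trans_lt hs.1, hs.2.trans (min_le_right _ _)⟩
    have key : ∀ s ∈ Ioc c b, f s ≤ M * (1/2) := by
      intro s hs
      have hsplit : Ioo (0:ℝ) s = Ioc 0 c ∪ Ioo c s := by
        ext x
        constructor
        · rintro ⟨h1, h2⟩
          rcases le_or_gt x c with h3 | h3
          exacts [Or.inl ⟨h1, h3⟩, Or.inr ⟨h3, h2⟩]
        · rintro (⟨h1, h2⟩ | ⟨h1, h2⟩)
          exacts [⟨h1, lt_of_le_of_lt h2 hs.1⟩, ⟨hc0.trans_lt h1, h2⟩]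
      have hdisj : Disjoint (Ioc (0:ℝ) c) (Ioo c s) :=
        disjoint_left.2 fun x hx hx' => absurd hx.2 (not_le.2 hx'.1)
      have h1 := h s ⟨hc0.trans_lt hs.1, hs.2.trans (min_le_right _ _)⟩
      rw [hsplit, lintegral_union measurableSet_Ioo hdisj] at h1
      have hz : (∫⁻ u in Ioc (0:ℝ) c, f u ∂κ) = 0 := by
        rw [setLIntegral_eq_zero_iff measurableSet_Ioc hf]
        exact Filter.Eventually.of_forall (fun x hx => hcZ.2 x hx)
      rw [hz, zero_add] at h1
      have h2 : (∫⁻ u in Ioo c s, f u ∂κ) ≤ M * κ (Ioo c s) := by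
        calc (∫⁻ u in Ioo c s, f u ∂κ) ≤ ∫⁻ _ in Ioo c s, M ∂κ := by
              apply setLIntegral_mono' measurableSet_Ioo
              intro x hx
              exact le_iSup₂ (f := fun s _ => f s) x ⟨hx.1, hx.2.le.trans hs.2⟩
          _ = M * κ (Ioo c s) := by rw [setLIntegral_const]
      have h3 : κ (Ioo c s) ≤ 1/2 := by
        refine le_trans (measure_mono (Ioo_subset_Ioo le_rfl ?_)) hn.le
        exact hs.2.trans (min_le_left _ _)
      calc f s ≤ M * κ (Ioo c s) := h1.trans h2
        _ ≤ M * (1/2) := mul_le_mul_right h3 M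
    have hM2 : M ≤ M * (1/2) := iSup₂_le key
    have hM0 : M = 0 := by
      by_contra hM0
      have : M * (1/2) < M * 1 := by
        refine ENNReal.mul_lt_mul_right hM0 (hMC.trans_lt hC.lt_top).ne ?_
        norm_num
      rw [mul_one] at this
      exact absurd hM2 (not_le.2 this)
    have hbZ : b ∈ Z := by
      refine ⟨⟨hc0.trans hcb.le, min_le_right _ _⟩, fun s hs => ?_⟩
      rcases le_or_gt s c with h1 | h1
      · exact hcZ.2 s ⟨hs.1, h1⟩
      · exact le_antisymm ((le_iSup₂ (f := fun s _ => f s) s ⟨h1, hs.2⟩).trans hM0.le)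
          zero_le
    exact absurd (le_csSup hZbdd hbZ) (not_le.2 hcb)
  intro s hs
  exact hcZ.2 s ⟨hs.1, hs.2.trans_eq hceq.symm⟩



variable {Ω : Type*} [m0 : MeasurableSpace Ω] (P : Measure Ω)

lemma anti_le (T : Ω → ℝ) : Antitone (fun s : ℝ => P {ω | s ≤ T ω}) :=
  fun _ _ hab => measure_mono (fun _ h => hab.trans h)

lemma anti_lt2 (T : Ω → ℝ) : Antitone (fun s : ℝ => P {ω | s < T ω}) :=
  fun _ _ hab => measure_mono (fun _ h => lt_of_le_of_lt hab h)

lemma mono_B (m : Measure ℝ) (g : ℝ → ℝ≥0∞) :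
    Monotone (fun s : ℝ => ∫⁻ u in Ico 0 s, g u ∂m) :=
  fun _ _ hab => lintegral_mono_set (Ico_subset_Ico le_rfl hab)

lemma map_eq_sum [IsProbabilityMeasure P] {T : Ω → ℝ} (hT : Measurable T)
    {D : Ω → ℕ} (hD : Measurable D) (d : ℕ)
    (hDrange : ∀ ω, 1 ≤ D ω ∧ D ω ≤ d) {A : Set ℝ} (hA : MeasurableSet A) :
    Measure.map T P A
      = ∑ j ∈ Finset.Icc 1 d, Measure.map T (P.restrict {ω | D ω = j}) A := by
  rw [Measure.map_apply hT hA]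
  have hcover : T ⁻¹' A = ⋃ j ∈ Finset.Icc 1 d, (T ⁻¹' A ∩ {ω | D ω = j}) := by
    ext ω
    simp only [mem_iUnion, mem_inter_iff, mem_preimage, mem_setOf_eq, exists_prop,
      Finset.mem_Icc]
    exact ⟨fun h => ⟨D ω, ⟨(hDrange ω).1, (hDrange ω).2⟩, h, rfl⟩,
      fun ⟨j, _, h, _⟩ => h⟩
  rw [hcover, measure_biUnion_finset]
  · refine Finset.sum_congr rfl (fun j _ => ?_)
    rw [Measure.map_apply hT hA, Measure.restrict_apply (hT hA)]
  · intro i _ j _ hij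
    refine Set.disjoint_left.2 fun ω hωi hωj => hij ?_
    rw [← hωi.2, ← hωj.2]
  · exact fun j _ => (hT hA).inter (hD (measurableSet_singleton j))

lemma lintegral_map_sum [IsProbabilityMeasure P] {T : Ω → ℝ} (hT : Measurable T)
    {D : Ω → ℕ} (hD : Measurable D) (d : ℕ)
    (hDrange : ∀ ω, 1 ≤ D ω ∧ D ω ≤ d) {A : Set ℝ} (hA : MeasurableSet A)
    (g : ℝ → ℝ≥0∞) :
    ∫⁻ u in A, g u ∂(Measure.map T P)
      = ∑ j ∈ Finset.Icc 1 d, ∫⁻ u in A, g u ∂(Measure.map T (P.restrict {ω | D ω = j})) := by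
  have hmeq : Measure.map T P
      = ∑ j ∈ Finset.Icc 1 d, Measure.map T (P.restrict {ω | D ω = j}) := by
    refine Measure.ext (fun s hs => ?_)
    rw [map_eq_sum P hT hD d hDrange hs, Measure.finset_sum_apply]
  calc ∫⁻ u in A, g u ∂(Measure.map T P)
      = ∫⁻ u, A.indicator g u ∂(Measure.map T P) := (lintegral_indicator hA g).symm
    _ = ∑ j ∈ Finset.Icc 1 d, ∫⁻ u, A.indicator g u ∂(Measure.map T (P.restrict {ω | D ω = j})) := by
        rw [hmeq, lintegral_finset_sum_measure]
    _ = _ := Finset.sum_congr rfl (fun j _ => lintegral_indicator hA g)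

lemma total_split [IsProbabilityMeasure P] {T Tt : Ω → ℝ} {D Dt : Ω → ℕ}
    (hT : Measurable T) (hTt : Measurable Tt) (hD : Measurable D) (hDt : Measurable Dt)
    (hpos : ∀ᵐ ω ∂P, 0 < Tt ω ∧ Tt ω ≤ T ω)
    (d : ℕ) (hDrange : ∀ ω, 1 ≤ D ω ∧ D ω ≤ d)
    (hDD : ∀ᵐ ω ∂P, Dt ω = if Tt ω = T ω then D ω else 0)
    {A : Set ℝ} (hA : MeasurableSet A) :
    Measure.map T P A
      = (∑ j ∈ Finset.Icc 1 d, Measure.map Tt (P.restrict {ω | Dt ω = j}) A)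
        + P ({ω | T ω ∈ A} ∩ {ω | Tt ω < T ω}) := by
  have hmeqTA : MeasurableSet {ω | T ω ∈ A} := hT hA
  have hmeqEq : MeasurableSet {ω | Tt ω = T ω} := measurableSet_eq_fun hTt hT
  rw [Measure.map_apply hT hA]
  have h1 : P (T ⁻¹' A) = P ({ω | T ω ∈ A} ∩ {ω | Tt ω = T ω})
      + P ({ω | T ω ∈ A} \ {ω | Tt ω = T ω}) :=
    (measure_inter_add_diff _ hmeqEq).symm
  have h2 : P ({ω | T ω ∈ A} \ {ω | Tt ω = T ω})
      = P ({ω | T ω ∈ A} ∩ {ω | Tt ω < T ω}) := by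
    refine measure_congr (Filter.eventuallyEq_set.2 ?_)
    filter_upwards [hpos] with ω hω
    simp only [mem_diff, mem_inter_iff, mem_setOf_eq]
    exact ⟨fun ⟨h, hne⟩ => ⟨h, lt_of_le_of_ne hω.2 hne⟩,
      fun ⟨h, hlt⟩ => ⟨h, hlt.ne⟩⟩
  have h3 : P ({ω | T ω ∈ A} ∩ {ω | Tt ω = T ω})
      = ∑ j ∈ Finset.Icc 1 d, Measure.map Tt (P.restrict {ω | Dt ω = j}) A := by
    have hsets : ∀ j, Measure.map Tt (P.restrict {ω | Dt ω = j}) A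
        = P ({ω | Tt ω ∈ A} ∩ {ω | Dt ω = j}) := fun j => by
      rw [Measure.map_apply hTt hA, Measure.restrict_apply (hTt hA)]; rfl
    have hcong : P ({ω | T ω ∈ A} ∩ {ω | Tt ω = T ω})
        = P (⋃ j ∈ Finset.Icc 1 d, ({ω | Tt ω ∈ A} ∩ {ω | Dt ω = j})) := by
      refine measure_congr (Filter.eventuallyEq_set.2 ?_)
      filter_upwards [hpos, hDD] with ω hω hDω
      simp only [mem_inter_iff, mem_setOf_eq, mem_iUnion, exists_prop, Finset.mem_Icc]
      constructor
      · rintro ⟨hTA, hEq⟩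
        refine ⟨D ω, ⟨(hDrange ω).1, (hDrange ω).2⟩, ?_, ?_⟩
        · rwa [hEq]
        · rw [hDω, if_pos hEq]
      · rintro ⟨j, ⟨hj1, _⟩, hTtA, hDtj⟩
        by_cases hEq : Tt ω = T ω
        · exact ⟨by rwa [← hEq], hEq⟩
        · rw [hDω, if_neg hEq] at hDtj
          omega
    rw [hcong, measure_biUnion_finset]
    · exact Finset.sum_congr rfl (fun j _ => (hsets j).symm)
    · intro i _ j _ hij
      refine Set.disjoint_left.2 fun ω hωi hωj => hij ?_
      rw [← hωi.2, ← hωj.2]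
    · exact fun j _ => (hTt hA).inter (hDt (measurableSet_singleton j))
  rw [h1, h2, h3]

lemma balance {T Tt : Ω → ℝ} (hT : Measurable T) (hTt : Measurable Tt)
    (hpos : ∀ᵐ ω ∂P, 0 < Tt ω ∧ Tt ω ≤ T ω) (s : ℝ) :
    P {ω | s ≤ T ω} + P {ω | T ω < s ∧ Tt ω < T ω}
      = P {ω | s ≤ Tt ω} + P {ω | Tt ω < s ∧ Tt ω < T ω} := by
  have hm1 : MeasurableSet {ω | T ω < s ∧ Tt ω < T ω} :=
    (hT measurableSet_Iio).inter (measurableSet_lt hTt hT)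
  have hm2 : MeasurableSet {ω | Tt ω < s ∧ Tt ω < T ω} :=
    (hTt measurableSet_Iio).inter (measurableSet_lt hTt hT)
  have hd1 : Disjoint {ω | s ≤ T ω} {ω | T ω < s ∧ Tt ω < T ω} :=
    Set.disjoint_left.2 fun ω h1 h2 => absurd h2.1 (not_lt.2 h1)
  have hd2 : Disjoint {ω | s ≤ Tt ω} {ω | Tt ω < s ∧ Tt ω < T ω} :=
    Set.disjoint_left.2 fun ω h1 h2 => absurd h2.1 (not_lt.2 h1)
  rw [← measure_union hd1 hm1, ← measure_union hd2 hm2]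
  refine measure_congr (Filter.eventuallyEq_set.2 ?_)
  filter_upwards [hpos] with ω hω
  simp only [mem_union, mem_setOf_eq]
  constructor
  · rintro (h | ⟨h1, h2⟩)
    · rcases le_or_gt s (Tt ω) with h' | h'
      · exact Or.inl h'
      · refine Or.inr ⟨h', lt_of_le_of_ne hω.2 ?_⟩
        intro hEq
        rw [hEq] at h'
        exact absurd h (not_le.2 h')
    · exact Or.inr ⟨lt_of_le_of_lt hω.2 h1, h2⟩
  · rintro (h | ⟨h1, h2⟩)
    · exact Or.inl (h.trans hω.2)
    · rcases le_or_gt s (T ω) with h' | h'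
      · exact Or.inl h'
      · exact Or.inr ⟨h', h2⟩





lemma anti_lt (T : Ω → ℝ) : Antitone (fun s : ℝ => P {ω | s < T ω}) :=
  fun _ _ hab => measure_mono (fun _ h => lt_of_le_of_lt hab h)

lemma star [IsProbabilityMeasure P] {T Tt : Ω → ℝ} (hT : Measurable T)
    (hpos : ∀ᵐ ω ∂P, 0 < Tt ω ∧ Tt ω ≤ T ω)
    (m : Measure ℝ) [IsFiniteMeasure m] (s : ℝ) (hs : 0 < P {ω | s ≤ Tt ω}) :
    m (Ico 0 s)
      = P {ω | s ≤ T ω} * (∫⁻ v in Ico 0 s, (P {ω | v < T ω})⁻¹ ∂m)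
        + ∫⁻ u in Ioo 0 s, (∫⁻ v in Ico 0 u, (P {ω | v < T ω})⁻¹ ∂m) ∂(Measure.map T P) := by
  set g : ℝ → ℝ≥0∞ := fun v => (P {ω | v < T ω})⁻¹ with hgdef
  have hg : Measurable g := ((anti_lt P T).measurable).inv
  set lam : Measure ℝ := Measure.map T P with hlam
  have hlamprob : IsProbabilityMeasure lam := Measure.isProbabilityMeasure_map hT.aemeasurable
  have hStpos : ∀ v, v < s → 0 < P {ω | v < T ω} := by
    intro v hv
    refine lt_of_lt_of_le hs (measure_mono_ae ?_)
    filter_upwards [hpos] with ω hω h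
    exact lt_of_lt_of_le (lt_of_lt_of_le hv h) hω.2
  have hlamIoo : ∀ v : ℝ, lam (Ioo v s) = P {ω | v < T ω ∧ T ω < s} := by
    intro v
    rw [hlam, Measure.map_apply hT measurableSet_Ioo]
    rfl
  have hanti : Antitone (fun v : ℝ => lam (Ioo v s)) :=
    fun _ _ hab => measure_mono (Ioo_subset_Ioo hab le_rfl)
  have hsplit : ∀ v, v < s → P {ω | v < T ω} = lam (Ioo v s) + P {ω | s ≤ T ω} := by
    intro v hv
    rw [hlamIoo]
    have hdisj : Disjoint {ω | v < T ω ∧ T ω < s} {ω | s ≤ T ω} :=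
      Set.disjoint_left.2 fun ω h1 h2 => absurd h1.2 (not_lt.2 h2)
    rw [← measure_union hdisj (hT measurableSet_Ici)]
    congr 1
    ext ω
    simp only [mem_setOf_eq, mem_union]
    constructor
    · intro h
      rcases lt_or_ge (T ω) s with h' | h'
      exacts [Or.inl ⟨h, h'⟩, Or.inr h']
    · rintro (⟨h, _⟩ | h)
      exacts [h, lt_of_lt_of_le hv h]
  -- Fubini swap
  have hSmeas : MeasurableSet {p : ℝ × ℝ | 0 ≤ p.2 ∧ p.2 < p.1 ∧ p.1 < s} := by
    refine MeasurableSet.inter ?_ (MeasurableSet.inter ?_ ?_)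
    · exact measurable_snd measurableSet_Ici
    · exact measurableSet_lt measurable_snd measurable_fst
    · exact measurable_fst measurableSet_Iio
  set F : ℝ × ℝ → ℝ≥0∞ :=
    fun p => ({p : ℝ × ℝ | 0 ≤ p.2 ∧ p.2 < p.1 ∧ p.1 < s}).indicator (fun p => g p.2) p
    with hFdef
  have hFmeas : Measurable F := (hg.comp measurable_snd).indicator hSmeas
  have hswap : ∫⁻ v in Ico 0 s, lam (Ioo v s) * g v ∂m
      = ∫⁻ u in Ioo 0 s, (∫⁻ v in Ico 0 u, g v ∂m) ∂lam := by
    have hL : ∀ v ∈ Ico (0:ℝ) s, lam (Ioo v s) * g v = ∫⁻ u, F (u, v) ∂lam := by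
      intro v hv
      have hfun : (fun u => F (u, v)) = (Ioo v s).indicator (fun _ => g v) := by
        funext u
        simp only [hFdef, Set.indicator_apply, mem_setOf_eq, mem_Ioo, hv.1, true_and]
      rw [hfun, lintegral_indicator_const measurableSet_Ioo, mul_comm]
    have hR : ∀ u : ℝ, (∫⁻ v in Ico 0 s, F (u, v) ∂m)
        = (Ioo 0 s).indicator (fun u => ∫⁻ v in Ico 0 u, g v ∂m) u := by
      intro u
      by_cases hu : u ∈ Ioo (0:ℝ) s
      · have hvfun : ∀ v, F (u, v) = (Ico 0 u).indicator g v := by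
          intro v
          simp only [hFdef, Set.indicator_apply, mem_setOf_eq, mem_Ico, hu.2, and_true]
        rw [indicator_of_mem hu]
        simp_rw [hvfun]
        rw [lintegral_indicator measurableSet_Ico,
          Measure.restrict_restrict measurableSet_Ico, Ico_inter_Ico]
        congr 2
        rw [max_self, min_eq_left hu.2.le]
      · rw [indicator_of_notMem hu]
        have hzero : ∀ v, F (u, v) = 0 := by
          intro v
          rw [hFdef]
          refine indicator_of_notMem ?_ _
          simp only [mem_setOf_eq, not_and, not_lt]
          intro h1 h2
          have hu' : 0 < u → s ≤ u := by simpa [mem_Ioo, not_and, not_lt] using hu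
          exact hu' (lt_of_le_of_lt h1 h2)
        simp_rw [hzero]
        simp
    calc ∫⁻ v in Ico 0 s, lam (Ioo v s) * g v ∂m
        = ∫⁻ v in Ico 0 s, (∫⁻ u, F (u, v) ∂lam) ∂m :=
          setLIntegral_congr_fun measurableSet_Ico
            (fun v hv => hL v hv)
      _ = ∫⁻ u, (∫⁻ v in Ico (0:ℝ) s, F (u, v) ∂m) ∂lam := by
          refine lintegral_lintegral_swap ?_
          exact (hFmeas.comp measurable_swap).aemeasurable
      _ = ∫⁻ u, (Ioo (0:ℝ) s).indicator (fun u => ∫⁻ v in Ico 0 u, g v ∂m) u ∂lam :=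
          lintegral_congr hR
      _ = ∫⁻ u in Ioo 0 s, (∫⁻ v in Ico 0 u, g v ∂m) ∂lam :=
          lintegral_indicator measurableSet_Ioo _
  -- main computation
  calc m (Ico 0 s) = ∫⁻ v in Ico 0 s, 1 ∂m := by rw [setLIntegral_one]
    _ = ∫⁻ v in Ico 0 s, (lam (Ioo v s) * g v + P {ω | s ≤ T ω} * g v) ∂m := by
        refine setLIntegral_congr_fun measurableSet_Ico
          (fun v hv => ?_)
        rw [← add_mul, ← hsplit v hv.2, hgdef]
        exact (ENNReal.mul_inv_cancel (hStpos v hv.2).ne' (measure_ne_top P _)).symm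
    _ = ∫⁻ v in Ico 0 s, lam (Ioo v s) * g v ∂m
        + P {ω | s ≤ T ω} * ∫⁻ v in Ico 0 s, g v ∂m := by
        rw [lintegral_add_right _ (hg.const_mul _), lintegral_const_mul _ hg]
    _ = _ := by rw [hswap, add_comm]



lemma map_finite [IsProbabilityMeasure P] {f : Ω → ℝ} (hf : Measurable f) (S : Set Ω) :
    IsFiniteMeasure (Measure.map f (P.restrict S)) := by
  constructor
  rw [Measure.map_apply hf MeasurableSet.univ, preimage_univ, Measure.restrict_apply_univ]
  exact measure_lt_top P S

lemma echain [IsProbabilityMeasure P] {T Tt : Ω → ℝ} {D Dt : Ω → ℕ}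
    (hT : Measurable T) (hTt : Measurable Tt) (hD : Measurable D) (hDt : Measurable Dt)
    (hpos : ∀ᵐ ω ∂P, 0 < Tt ω ∧ Tt ω ≤ T ω)
    (d : ℕ) (hDrange : ∀ ω, 1 ≤ D ω ∧ D ω ≤ d)
    (hDD : ∀ᵐ ω ∂P, Dt ω = if Tt ω = T ω then D ω else 0)
    (G : ℝ → ℝ≥0∞)
    (s : ℝ) (hs : 0 < P {ω | s ≤ Tt ω})
    (hG : (∑ j ∈ Finset.Icc 1 d, Measure.map Tt (P.restrict {ω | Dt ω = j}) (Ioo 0 s))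
          = ∫⁻ u in Ioo 0 s, G u ∂(Measure.map T P)) :
    P {ω | s ≤ T ω} + Measure.map T P (Ioo 0 s)
      = P {ω | s ≤ Tt ω}
        + P {ω | s ≤ T ω} * (∫⁻ v in Ico 0 s,
            (P {ω | v < T ω})⁻¹ ∂(Measure.map Tt (P.restrict {ω | Dt ω = 0})))
        + ∫⁻ u in Ioo 0 s, ((∫⁻ v in Ico 0 u,
            (P {ω | v < T ω})⁻¹ ∂(Measure.map Tt (P.restrict {ω | Dt ω = 0}))) + G u)
            ∂(Measure.map T P) := by
  set m : Measure ℝ := Measure.map Tt (P.restrict {ω | Dt ω = 0}) with hm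
  haveI : IsFiniteMeasure m := map_finite P hTt _
  set lam : Measure ℝ := Measure.map T P with hlam
  set Bf : ℝ → ℝ≥0∞ := fun u => ∫⁻ v in Ico 0 u, (P {ω | v < T ω})⁻¹ ∂m with hBf
  have hBfmeas : Measurable Bf := (mono_B m _).measurable
  have step1 : lam (Ioo 0 s)
      = (∑ j ∈ Finset.Icc 1 d, Measure.map Tt (P.restrict {ω | Dt ω = j}) (Ioo 0 s))
        + P ({ω | T ω ∈ Ioo 0 s} ∩ {ω | Tt ω < T ω}) :=
    total_split P hT hTt hD hDt hpos d hDrange hDD measurableSet_Ioo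
  have step2 : P ({ω | T ω ∈ Ioo 0 s} ∩ {ω | Tt ω < T ω})
      = P {ω | T ω < s ∧ Tt ω < T ω} := by
    refine measure_congr (Filter.eventuallyEq_set.2 ?_)
    filter_upwards [hpos] with ω hω
    simp only [mem_inter_iff, mem_setOf_eq, mem_Ioo]
    exact ⟨fun ⟨⟨_, h2⟩, h3⟩ => ⟨h2, h3⟩,
      fun ⟨h2, h3⟩ => ⟨⟨lt_of_lt_of_le hω.1 hω.2, h2⟩, h3⟩⟩
  have step3 := balance P hT hTt hpos s
  have step4 : P {ω | Tt ω < s ∧ Tt ω < T ω} = m (Ico 0 s) := by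
    rw [hm, Measure.map_apply hTt measurableSet_Ico,
      Measure.restrict_apply (hTt measurableSet_Ico)]
    refine measure_congr (Filter.eventuallyEq_set.2 ?_)
    filter_upwards [hpos, hDD] with ω hω hDω
    simp only [mem_setOf_eq, mem_inter_iff, mem_preimage, mem_Ico]
    constructor
    · rintro ⟨h1, h2⟩
      refine ⟨⟨hω.1.le, h1⟩, ?_⟩
      rw [hDω, if_neg h2.ne]
    · rintro ⟨⟨_, h1⟩, h2⟩
      refine ⟨h1, lt_of_le_of_ne hω.2 ?_⟩
      intro hEq
      rw [hDω, if_pos hEq] at h2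
      have := (hDrange ω).1
      omega
  have step5 : m (Ico 0 s)
      = P {ω | s ≤ T ω} * (∫⁻ v in Ico 0 s, (P {ω | v < T ω})⁻¹ ∂m)
        + ∫⁻ u in Ioo 0 s, Bf u ∂lam := star P hT hpos m s hs
  calc P {ω | s ≤ T ω} + lam (Ioo 0 s)
      = (∑ j ∈ Finset.Icc 1 d, Measure.map Tt (P.restrict {ω | Dt ω = j}) (Ioo 0 s))
        + (P {ω | s ≤ T ω} + P {ω | T ω < s ∧ Tt ω < T ω}) := by
        rw [step1, step2]; ring
    _ = (∫⁻ u in Ioo 0 s, G u ∂lam)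
        + (P {ω | s ≤ Tt ω} + m (Ico 0 s)) := by rw [hG, step3, step4]
    _ = P {ω | s ≤ Tt ω}
        + P {ω | s ≤ T ω} * (∫⁻ v in Ico 0 s, (P {ω | v < T ω})⁻¹ ∂m)
        + ((∫⁻ u in Ioo 0 s, Bf u ∂lam) + (∫⁻ u in Ioo 0 s, G u ∂lam)) := by
        rw [step5]; ring
    _ = _ := by
        rw [← lintegral_add_left hBfmeas]

lemma hazard_to_density (ρ ν : Measure ℝ) [IsFiniteMeasure ρ] [IsFiniteMeasure ν]
    (q1 q2 : ℝ → ℝ≥0∞) (hq1 : Measurable q1) (hq2 : Measurable q2)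
    (t : ℝ) (ε : ℝ≥0∞) (hε : 0 < ε)
    (hq1lb : ∀ u ∈ Ioc (0:ℝ) t, ε ≤ q1 u) (hq1ub : ∀ u, q1 u ≠ ∞)
    (hq2lb : ∀ u ∈ Ioc (0:ℝ) t, ε ≤ q2 u) (hq2ub : ∀ u, q2 u ≠ ∞)
    (hH : ∀ r, r ≤ t → ∫⁻ u in Ioc 0 r, (q1 u)⁻¹ ∂ρ = ∫⁻ u in Ioc 0 r, (q2 u)⁻¹ ∂ν)
    {A : Set ℝ} (hA : MeasurableSet A) (hAsub : A ⊆ Ioc 0 t) :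
    ρ A = ∫⁻ u in A, q1 u * (q2 u)⁻¹ ∂ν := by
  have hfin : ∀ (μ' : Measure ℝ) (q : ℝ → ℝ≥0∞), IsFiniteMeasure μ' →
      (∀ u ∈ Ioc (0:ℝ) t, ε ≤ q u) →
      IsFiniteMeasure ((μ'.restrict (Ioc 0 t)).withDensity (fun u => (q u)⁻¹)) := by
    intro μ' q hμ' hq
    constructor
    rw [withDensity_apply _ MeasurableSet.univ, Measure.restrict_restrict MeasurableSet.univ,
      univ_inter]
    calc (∫⁻ u in Ioc (0:ℝ) t, (q u)⁻¹ ∂μ') ≤ ∫⁻ _ in Ioc (0:ℝ) t, ε⁻¹ ∂μ' := by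
          refine setLIntegral_mono' measurableSet_Ioc (fun u hu => ?_)
          exact ENNReal.inv_le_inv.2 (hq u hu)
      _ = ε⁻¹ * μ' (Ioc 0 t) := setLIntegral_const _ _
      _ < ∞ := ENNReal.mul_lt_top (ENNReal.inv_lt_top.2 hε) (measure_lt_top μ' _)
  haveI h1 := hfin ρ q1 inferInstance hq1lb
  haveI h2 := hfin ν q2 inferInstance hq2lb
  have heq : (ρ.restrict (Ioc 0 t)).withDensity (fun u => (q1 u)⁻¹)
      = (ν.restrict (Ioc 0 t)).withDensity (fun u => (q2 u)⁻¹) := by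
    refine Measure.ext_of_Iic _ _ (fun a => ?_)
    rw [withDensity_apply _ measurableSet_Iic, withDensity_apply _ measurableSet_Iic,
      Measure.restrict_restrict measurableSet_Iic, Measure.restrict_restrict measurableSet_Iic]
    have hset : Iic a ∩ Ioc (0:ℝ) t = Ioc 0 (min a t) := by
      rw [inter_comm, Ioc_inter_Iic, min_comm]
    rw [hset]
    exact hH (min a t) (min_le_right a t)
  have hconv : ∀ (μ' : Measure ℝ) (q : ℝ → ℝ≥0∞), Measurable q →
      ∀ (g : ℝ → ℝ≥0∞), Measurable g →
      (∫⁻ u in A, g u ∂((μ'.restrict (Ioc 0 t)).withDensity (fun u => (q u)⁻¹)))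
        = ∫⁻ u in A, (q u)⁻¹ * g u ∂μ' := by
    intro μ' q hq g hg
    have hres : ((μ'.restrict (Ioc 0 t)).withDensity (fun u => (q u)⁻¹)).restrict A
        = (μ'.restrict A).withDensity (fun u => (q u)⁻¹) := by
      rw [restrict_withDensity hA, Measure.restrict_restrict hA,
        inter_eq_self_of_subset_left hAsub]
    show (∫⁻ u, g u ∂(((μ'.restrict (Ioc 0 t)).withDensity (fun u => (q u)⁻¹)).restrict A)) = _
    rw [hres, lintegral_withDensity_eq_lintegral_mul _ (f := fun u => (q u)⁻¹) hq.inv hg]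
    rfl
  have h0 : ∫⁻ u in A, (q1 u)⁻¹ * q1 u ∂ρ = ρ A := by
    have h1 : ∫⁻ u in A, (q1 u)⁻¹ * q1 u ∂ρ = ∫⁻ _ in A, 1 ∂ρ :=
      setLIntegral_congr_fun hA (fun u hu => by
        rw [ENNReal.inv_mul_cancel (lt_of_lt_of_le hε (hq1lb u (hAsub hu))).ne' (hq1ub u)])
    rw [h1, setLIntegral_one]
  calc ρ A = ∫⁻ u in A, (q1 u)⁻¹ * q1 u ∂ρ := h0.symm
    _ = ∫⁻ u in A, q1 u ∂((ρ.restrict (Ioc 0 t)).withDensity (fun u => (q1 u)⁻¹)) :=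
        (hconv ρ q1 hq1 q1 hq1).symm
    _ = ∫⁻ u in A, q1 u ∂((ν.restrict (Ioc 0 t)).withDensity (fun u => (q2 u)⁻¹)) := by
        rw [heq]
    _ = ∫⁻ u in A, (q2 u)⁻¹ * q1 u ∂ν := hconv ν q2 hq2 q1 hq1
    _ = ∫⁻ u in A, q1 u * (q2 u)⁻¹ ∂ν := lintegral_congr (fun u => mul_comm _ _)


lemma KIcons (a b c : ℝ≥0∞) (h : a = b + a * c) (ha0 : a ≠ 0) (hatop : a ≠ ∞)
    (hctop : c ≠ ∞) : 1 - c = b * a⁻¹ ∧ c ≤ 1 := by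
  have hble : a * c ≤ a * 1 := by
    rw [mul_one]
    exact le_add_self.trans h.ge
  have hc1 : c ≤ 1 := (ENNReal.mul_le_mul_iff_right ha0 hatop).1 hble
  have h1 : a - a * c = b := ENNReal.sub_eq_of_eq_add (mul_ne_top hatop hctop) h
  have h2 : a * (1 - c) = b := by
    rw [ENNReal.mul_sub (fun _ _ => hatop), mul_one, h1]
  refine ⟨?_, hc1⟩
  calc 1 - c = a⁻¹ * a * (1 - c) := by rw [ENNReal.inv_mul_cancel ha0 hatop, one_mul]
    _ = a⁻¹ * (a * (1 - c)) := mul_assoc _ _ _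
    _ = a⁻¹ * b := by rw [h2]
    _ = b * a⁻¹ := mul_comm _ _


lemma forward
    {Ω : Type*} [m0 : MeasurableSpace Ω] (P : Measure Ω) [IsProbabilityMeasure P]
    (d : ℕ) (hd : 1 ≤ d)
    (T Tt : Ω → ℝ) (D Dt : Ω → ℕ)
    (hT : Measurable T) (hTt : Measurable Tt)
    (hD : Measurable D) (hDt : Measurable Dt)
    (hpos : ∀ᵐ ω ∂P, 0 < Tt ω ∧ Tt ω ≤ T ω)
    (hDrange : ∀ ω, 1 ≤ D ω ∧ D ω ≤ d)
    (hDtrange : ∀ ω, Dt ω ≤ d)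
    (hDD : ∀ᵐ ω ∂P, Dt ω = if Tt ω = T ω then D ω else 0)
    (μ μt : ℕ → Measure ℝ)
    (hμ : ∀ j, μ j = Measure.map T (P.restrict {ω | D ω = j}))
    (hμt : ∀ j, μt j = Measure.map Tt (P.restrict {ω | Dt ω = j}))
    (H Ht : ℕ → ℝ → ℝ≥0∞)
    (hH : ∀ j t, H j t = ∫⁻ s in Ioc 0 t, (P {ω | s ≤ T ω})⁻¹ ∂(μ j))
    (hHt : ∀ j t, Ht j t = ∫⁻ s in Ioc 0 t, (P {ω | s ≤ Tt ω})⁻¹ ∂(μt j))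
    (𝒥 : Set ℝ) (h𝒥 : 𝒥 = {t | 0 ≤ t ∧ 0 < P {ω | t < Tt ω}})
    (B : ℝ → ℝ≥0∞)
    (hB : ∀ s, B s = ∫⁻ u in Ico 0 s, (P {ω | u < T ω})⁻¹ ∂(μt 0))
    (hi : ∀ j, 1 ≤ j → j ≤ d → ∀ t ∈ 𝒥, Ht j t = H j t) :
    (∀ j, 1 ≤ j → j ≤ d → ∀ A : Set ℝ, MeasurableSet A → A ⊆ 𝒥 →
      μt j A = ∫⁻ s in A, (1 - B s) ∂(μ j)) := by
  have hJ : ∀ x : ℝ, x ∈ 𝒥 ↔ 0 ≤ x ∧ 0 < P {ω | x < Tt ω} := fun x => by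
    rw [h𝒥]; exact Iff.rfl
  have hSttm : Measurable (fun s : ℝ => P {ω | s ≤ Tt ω}) := (anti_le P Tt).measurable
  have hStpm : Measurable (fun s : ℝ => P {ω | s ≤ T ω}) := (anti_le P T).measurable
  have hBeq : B = fun s => ∫⁻ u in Ico 0 s, (P {ω | u < T ω})⁻¹ ∂(μt 0) := funext hB
  have hBmono : Monotone B := hBeq ▸ mono_B (μt 0) _
  have hBmeas : Measurable B := hBmono.measurable
  have h1Banti : Antitone (fun u : ℝ => 1 - B u) :=
    fun _ _ hab => tsub_le_tsub_left (hBmono hab) 1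
  have h1Bmeas : Measurable (fun u : ℝ => 1 - B u) := h1Banti.measurable
  have hμfin : ∀ j, IsFiniteMeasure (μ j) := fun j => by rw [hμ j]; exact map_finite P hT _
  have hμtfin : ∀ j, IsFiniteMeasure (μt j) := fun j => by rw [hμt j]; exact map_finite P hTt _
  haveI hlamP : IsProbabilityMeasure (Measure.map T P) :=
    Measure.isProbabilityMeasure_map hT.aemeasurable
  have hSttStp : ∀ s : ℝ, P {ω | s ≤ Tt ω} ≤ P {ω | s ≤ T ω} := fun s =>
    measure_mono_ae (by filter_upwards [hpos] with ω hω h; exact le_trans h hω.2)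
  have hJStt : ∀ t s : ℝ, s ≤ t → P {ω | t < Tt ω} ≤ P {ω | s ≤ Tt ω} := fun t s hst =>
    measure_mono (fun ω h => le_of_lt (lt_of_le_of_lt hst h))
  have hJSt : ∀ t v : ℝ, v ≤ t → P {ω | t < Tt ω} ≤ P {ω | v < T ω} := fun t v hvt =>
    measure_mono_ae (by
      filter_upwards [hpos] with ω hω h
      exact lt_of_le_of_lt hvt (lt_of_lt_of_le h hω.2))
  have hμt0le1 : ∀ A : Set ℝ, MeasurableSet A → μt 0 A ≤ 1 := fun A hA => by
    rw [hμt 0, Measure.map_apply hTt hA, Measure.restrict_apply (hTt hA)]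
    exact prob_le_one
  have hBub : ∀ t u : ℝ, u ≤ t → B u ≤ (P {ω | t < Tt ω})⁻¹ := by
    intro t u hut
    rw [hB u]
    calc ∫⁻ v in Ico 0 u, (P {ω | v < T ω})⁻¹ ∂(μt 0)
        ≤ ∫⁻ _ in Ico 0 u, (P {ω | t < Tt ω})⁻¹ ∂(μt 0) :=
          setLIntegral_mono' measurableSet_Ico (fun v hv =>
            ENNReal.inv_le_inv.2 (hJSt t v (le_trans hv.2.le hut)))
      _ = (P {ω | t < Tt ω})⁻¹ * μt 0 (Ico 0 u) := setLIntegral_const _ _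
      _ ≤ (P {ω | t < Tt ω})⁻¹ * 1 := mul_le_mul_right (hμt0le1 _ measurableSet_Ico) _
      _ = (P {ω | t < Tt ω})⁻¹ := mul_one _
  have hBfin : ∀ t : ℝ, 0 < P {ω | t < Tt ω} → ∀ u : ℝ, u ≤ t → B u ≠ ∞ := fun t ht u hut =>
    ne_top_of_le_ne_top (ENNReal.inv_ne_top.2 ht.ne') (hBub t u hut)
  have hsum : ∀ (g : ℝ → ℝ≥0∞) (s : ℝ),
      (∀ j' ∈ Finset.Icc 1 d, μt j' (Ioo 0 s) = ∫⁻ u in Ioo 0 s, g u ∂(μ j')) →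
      (∑ j' ∈ Finset.Icc 1 d, Measure.map Tt (P.restrict {ω | Dt ω = j'}) (Ioo 0 s))
        = ∫⁻ u in Ioo 0 s, g u ∂(Measure.map T P) := by
    intro g s hper
    have h1 : ∀ j' ∈ Finset.Icc 1 d,
        Measure.map Tt (P.restrict {ω | Dt ω = j'}) (Ioo 0 s)
          = ∫⁻ u in Ioo 0 s, g u ∂(Measure.map T (P.restrict {ω | D ω = j'})) := fun j' hj' => by
      rw [← hμt j', hper j' hj', hμ j']
    rw [Finset.sum_congr rfl h1, ← lintegral_map_sum P hT hD d hDrange measurableSet_Ioo g]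
  have hEch : ∀ (G : ℝ → ℝ≥0∞) (s : ℝ), 0 < P {ω | s ≤ Tt ω} →
      (∀ j' ∈ Finset.Icc 1 d, μt j' (Ioo 0 s) = ∫⁻ u in Ioo 0 s, G u ∂(μ j')) →
      P {ω | s ≤ T ω} + Measure.map T P (Ioo 0 s)
        = P {ω | s ≤ Tt ω} + P {ω | s ≤ T ω} * B s
          + ∫⁻ u in Ioo 0 s, (B u + G u) ∂(Measure.map T P) := by
    intro G s hs hper
    have hE := echain P hT hTt hD hDt hpos d hDrange hDD G s hs (hsum G s hper)
    simp only [← hμt] at hE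
    simp only [← hB] at hE
    exact hE
  -- per-j density identity on Ioc 0 t for t ∈ 𝒥
  have hdens : ∀ t, t ∈ 𝒥 → ∀ j', 1 ≤ j' → j' ≤ d → ∀ A' : Set ℝ, MeasurableSet A' →
      A' ⊆ Ioc 0 t →
      μt j' A' = ∫⁻ u in A', (P {ω | u ≤ Tt ω}) * (P {ω | u ≤ T ω})⁻¹ ∂(μ j') := by
    intro t ht j' hj1' hjd' A' hA' hsub
    haveI := hμtfin j'; haveI := hμfin j'
    have hε0 : 0 < P {ω | t < Tt ω} := ((hJ t).1 ht).2
    refine hazard_to_density (μt j') (μ j') _ _ hSttm hStpm t _ hε0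
      (fun u hu => hJStt t u hu.2) (fun u => measure_ne_top P _)
      (fun u hu => le_trans (hJStt t u hu.2) (hSttStp u)) (fun u => measure_ne_top P _)
      ?_ hA' hsub
    intro r hr
    rcases le_or_gt r 0 with hr0 | hr0
    · rw [Ioc_eq_empty (not_lt.2 hr0)]
      simp [Measure.restrict_empty]
    · have hrJ : r ∈ 𝒥 := (hJ r).2 ⟨hr0.le,
        lt_of_lt_of_le hε0 (measure_mono (fun ω h => lt_of_le_of_lt hr h))⟩
      have h := hi j' hj1' hjd' r hrJ
      rw [hHt j' r, hH j' r] at h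
      exact h
  -- key identity via Gronwall
  have hKI : ∀ t, t ∈ 𝒥 → ∀ s, s ∈ Ioc (0:ℝ) t →
      P {ω | s ≤ T ω} = P {ω | s ≤ Tt ω} + P {ω | s ≤ T ω} * B s := by
    intro t ht
    have hε0 : 0 < P {ω | t < Tt ω} := ((hJ t).1 ht).2
    have hεinv : (P {ω | t < Tt ω})⁻¹ ≠ ∞ := ENNReal.inv_ne_top.2 hε0.ne'
    set pf : ℝ → ℝ≥0∞ := fun u => P {ω | u ≤ Tt ω} + P {ω | u ≤ T ω} * B u with hpfdef
    set f : ℝ → ℝ≥0∞ :=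
      fun u => (pf u - P {ω | u ≤ T ω}) ⊔ (P {ω | u ≤ T ω} - pf u) with hfdef
    have hpfm : Measurable pf := hSttm.add (hStpm.mul hBmeas)
    have hfm : Measurable f := (hpfm.sub hStpm).max (hStpm.sub hpfm)
    have hqpos : ∀ u ∈ Ioc (0:ℝ) t, P {ω | t < Tt ω} ≤ P {ω | u ≤ T ω} :=
      fun u hu => le_trans (hJStt t u hu.2) (hSttStp u)
    set κ : Measure ℝ := ((Measure.map T P).restrict (Ioc 0 t)).withDensity
      (fun u => (P {ω | u ≤ T ω})⁻¹) with hκdef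
    haveI hκfin : IsFiniteMeasure κ := by
      constructor
      rw [hκdef, withDensity_apply _ MeasurableSet.univ,
        Measure.restrict_restrict MeasurableSet.univ, univ_inter]
      calc ∫⁻ u in Ioc 0 t, (P {ω | u ≤ T ω})⁻¹ ∂(Measure.map T P)
          ≤ ∫⁻ _ in Ioc 0 t, (P {ω | t < Tt ω})⁻¹ ∂(Measure.map T P) :=
            setLIntegral_mono' measurableSet_Ioc
              (fun u hu => ENNReal.inv_le_inv.2 (hqpos u hu))
        _ = (P {ω | t < Tt ω})⁻¹ * (Measure.map T P) (Ioc 0 t) := setLIntegral_const _ _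
        _ < ∞ := ENNReal.mul_lt_top hεinv.lt_top (measure_lt_top _ _)
    have hineq : ∀ s ∈ Ioc (0:ℝ) t, f s ≤ ∫⁻ u in Ioo 0 s, f u ∂κ := by
      intro s hs
      have hsJ : 0 < P {ω | s ≤ Tt ω} := lt_of_lt_of_le hε0 (hJStt t s hs.2)
      have hper : ∀ j' ∈ Finset.Icc 1 d, μt j' (Ioo 0 s)
          = ∫⁻ u in Ioo 0 s, (P {ω | u ≤ Tt ω}) * (P {ω | u ≤ T ω})⁻¹ ∂(μ j') :=
        fun j' hj' => hdens t ht j' (Finset.mem_Icc.1 hj').1 (Finset.mem_Icc.1 hj').2 _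
          measurableSet_Ioo (fun u hu => ⟨hu.1, le_trans hu.2.le hs.2⟩)
      have hE := hEch (fun u => (P {ω | u ≤ Tt ω}) * (P {ω | u ≤ T ω})⁻¹) s hsJ hper
      have hX : Measure.map T P (Ioo 0 s)
          = ∫⁻ u in Ioo 0 s, (P {ω | u ≤ T ω}) * (P {ω | u ≤ T ω})⁻¹ ∂(Measure.map T P) := by
        rw [← setLIntegral_one]
        refine setLIntegral_congr_fun measurableSet_Ioo
          (fun u hu => ?_)
        exact (ENNReal.mul_inv_cancel
          (lt_of_lt_of_le hε0 (hqpos u ⟨hu.1, hu.2.le.trans hs.2⟩)).ne'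
          (measure_ne_top P _)).symm
      have hY : ∫⁻ u in Ioo 0 s, (B u + (P {ω | u ≤ Tt ω}) * (P {ω | u ≤ T ω})⁻¹)
            ∂(Measure.map T P)
          = ∫⁻ u in Ioo 0 s, pf u * (P {ω | u ≤ T ω})⁻¹ ∂(Measure.map T P) := by
        refine setLIntegral_congr_fun measurableSet_Ioo
          (fun u hu => ?_)
        have hne : P {ω | u ≤ T ω} ≠ 0 :=
          (lt_of_lt_of_le hε0 (hqpos u ⟨hu.1, hu.2.le.trans hs.2⟩)).ne'
        have h2 : pf u * (P {ω | u ≤ T ω})⁻¹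
            = (P {ω | u ≤ Tt ω}) * (P {ω | u ≤ T ω})⁻¹ + B u := by
          show (P {ω | u ≤ Tt ω} + P {ω | u ≤ T ω} * B u) * (P {ω | u ≤ T ω})⁻¹ = _
          rw [add_mul, mul_right_comm, ENNReal.mul_inv_cancel hne (measure_ne_top P _),
            one_mul]
        rw [h2, add_comm]
      have hadd : P {ω | s ≤ T ω}
            + (∫⁻ u in Ioo 0 s, (P {ω | u ≤ T ω}) * (P {ω | u ≤ T ω})⁻¹ ∂(Measure.map T P))
          = pf s + (∫⁻ u in Ioo 0 s, pf u * (P {ω | u ≤ T ω})⁻¹ ∂(Measure.map T P)) := by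
        rw [← hX, ← hY]
        exact hE
      have hXfin : (∫⁻ u in Ioo 0 s, (P {ω | u ≤ T ω}) * (P {ω | u ≤ T ω})⁻¹
          ∂(Measure.map T P)) ≠ ∞ := by
        rw [← hX]; exact measure_ne_top _ _
      have hYfin : (∫⁻ u in Ioo 0 s, pf u * (P {ω | u ≤ T ω})⁻¹ ∂(Measure.map T P)) ≠ ∞ := by
        have hb : ∀ u ∈ Ioo (0:ℝ) s, pf u * (P {ω | u ≤ T ω})⁻¹
            ≤ (1 + (P {ω | t < Tt ω})⁻¹) * (P {ω | t < Tt ω})⁻¹ := by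
          intro u hu
          have hu' : u ∈ Ioc (0:ℝ) t := ⟨hu.1, hu.2.le.trans hs.2⟩
          refine mul_le_mul' (add_le_add prob_le_one ?_) (ENNReal.inv_le_inv.2 (hqpos u hu'))
          calc P {ω | u ≤ T ω} * B u ≤ 1 * (P {ω | t < Tt ω})⁻¹ :=
                mul_le_mul' prob_le_one (hBub t u hu'.2)
            _ = (P {ω | t < Tt ω})⁻¹ := one_mul _
        refine ne_top_of_le_ne_top ?_ (le_trans (setLIntegral_mono' measurableSet_Ioo hb)
          (setLIntegral_const _ _).le)
        exact ENNReal.mul_ne_top (ENNReal.mul_ne_top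
          (ENNReal.add_ne_top.2 ⟨ENNReal.one_ne_top, hεinv⟩) hεinv) (measure_ne_top _ _)
      have hZbd : ∀ (g1 g2 : ℝ → ℝ≥0∞), Measurable g1 →
          (∀ u, g2 u - g1 u ≤ f u) →
          (∫⁻ u in Ioo 0 s, g2 u * (P {ω | u ≤ T ω})⁻¹ ∂(Measure.map T P))
            - (∫⁻ u in Ioo 0 s, g1 u * (P {ω | u ≤ T ω})⁻¹ ∂(Measure.map T P))
            ≤ ∫⁻ u in Ioo 0 s, f u * (P {ω | u ≤ T ω})⁻¹ ∂(Measure.map T P) := by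
        intro g1 g2 hg1 hle
        rw [tsub_le_iff_right]
        have hpt : ∀ u, g2 u * (P {ω | u ≤ T ω})⁻¹
            ≤ f u * (P {ω | u ≤ T ω})⁻¹ + g1 u * (P {ω | u ≤ T ω})⁻¹ := by
          intro u
          rw [← add_mul]
          refine mul_le_mul_left ?_ _
          calc g2 u ≤ (g2 u - g1 u) + g1 u := le_tsub_add
            _ ≤ f u + g1 u := add_le_add_left (hle u) _
        calc (∫⁻ u in Ioo 0 s, g2 u * (P {ω | u ≤ T ω})⁻¹ ∂(Measure.map T P))
            ≤ ∫⁻ u in Ioo 0 s, (f u * (P {ω | u ≤ T ω})⁻¹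
                + g1 u * (P {ω | u ≤ T ω})⁻¹) ∂(Measure.map T P) :=
              lintegral_mono (fun u => hpt u)
          _ = _ := lintegral_add_left (hfm.mul hStpm.inv) _
      have hkey : f s ≤ ∫⁻ u in Ioo 0 s, f u * (P {ω | u ≤ T ω})⁻¹ ∂(Measure.map T P) := by
        have h1 := tsub_sup_le_of_add_eq hXfin hYfin hadd
        have h2 := hZbd (fun u => P {ω | u ≤ T ω}) pf hStpm (fun u => le_sup_left)
        have h3 := hZbd pf (fun u => P {ω | u ≤ T ω}) hpfm (fun u => le_sup_right)
        calc f s = (pf s - P {ω | s ≤ T ω}) ⊔ (P {ω | s ≤ T ω} - pf s) := rfl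
          _ ≤ _ := by
              rw [sup_comm]
              exact le_trans h1 (sup_le h2 h3)
      have hκres : ∫⁻ u in Ioo 0 s, f u ∂κ
          = ∫⁻ u in Ioo 0 s, f u * (P {ω | u ≤ T ω})⁻¹ ∂(Measure.map T P) := by
        have h1 : κ.restrict (Ioo 0 s)
            = ((Measure.map T P).restrict (Ioo 0 s)).withDensity
                (fun u => (P {ω | u ≤ T ω})⁻¹) := by
          rw [hκdef, restrict_withDensity measurableSet_Ioo,
            Measure.restrict_restrict_of_subset
              (Ioo_subset_Ioc_self.trans (Ioc_subset_Ioc_right hs.2))]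
        show ∫⁻ u, f u ∂(κ.restrict (Ioo 0 s)) = _
        rw [h1, lintegral_withDensity_eq_lintegral_mul _ (f := fun u => (P {ω | u ≤ T ω})⁻¹) hStpm.inv hfm]
        exact lintegral_congr (fun u => mul_comm _ _)
      rw [hκres]
      exact hkey
    have hfC : ∀ s ∈ Ioc (0:ℝ) t, f s ≤ 1 + (P {ω | t < Tt ω})⁻¹ := by
      intro s hs
      refine sup_le (le_trans tsub_le_self ?_) (le_trans tsub_le_self ?_)
      · refine add_le_add prob_le_one ?_
        calc P {ω | s ≤ T ω} * B s ≤ 1 * (P {ω | t < Tt ω})⁻¹ :=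
              mul_le_mul' prob_le_one (hBub t s hs.2)
          _ = (P {ω | t < Tt ω})⁻¹ := one_mul _
      · exact le_trans prob_le_one le_self_add
    have hzero := gronwall_zero κ f hfm (1 + (P {ω | t < Tt ω})⁻¹)
      (ENNReal.add_ne_top.2 ⟨ENNReal.one_ne_top, hεinv⟩) t hfC hineq
    intro s hs
    have h0 := hzero s hs
    have ha : pf s - P {ω | s ≤ T ω} = 0 :=
      le_antisymm (le_trans le_sup_left h0.le) zero_le
    have hb : P {ω | s ≤ T ω} - pf s = 0 :=
      le_antisymm (le_trans le_sup_right h0.le) zero_le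
    exact le_antisymm (tsub_eq_zero_iff_le.1 hb) (tsub_eq_zero_iff_le.1 ha)
  -- final assembly
  intro j hj1 hjd A hA hAJ
  haveI := hμtfin j; haveI := hμfin j
  have hwd : ∫⁻ s' in A, (1 - B s') ∂(μ j) = ((μ j).withDensity (fun u => 1 - B u)) A :=
    (withDensity_apply _ hA).symm
  rw [hwd]
  have hTtpos : P {ω | ¬ 0 < Tt ω} = 0 := ae_iff.1 (hpos.mono fun ω h => h.1)
  have hTpos : P {ω | ¬ 0 < T ω} = 0 :=
    ae_iff.1 (hpos.mono fun ω h => lt_of_lt_of_le h.1 h.2)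
  have hz1 : μt j {0} = 0 := by
    rw [hμt j, Measure.map_apply hTt (measurableSet_singleton 0),
      Measure.restrict_apply (hTt (measurableSet_singleton 0))]
    refine measure_mono_null (fun ω h => ?_) hTtpos
    have h1 : Tt ω = 0 := h.1
    simp [h1]
  have hzμ : μ j {0} = 0 := by
    rw [hμ j, Measure.map_apply hT (measurableSet_singleton 0),
      Measure.restrict_apply (hT (measurableSet_singleton 0))]
    refine measure_mono_null (fun ω h => ?_) hTpos
    have h1 : T ω = 0 := h.1
    simp [h1]
  have hz2 : ((μ j).withDensity (fun u => 1 - B u)) {0} = 0 := by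
    rw [withDensity_apply _ (measurableSet_singleton 0), Measure.restrict_eq_zero.2 hzμ,
      lintegral_zero_measure]
  have hsplit : A = (A ∩ {0}) ∪ (A \ {0}) := (inter_union_diff A {0}).symm
  have hmd : MeasurableSet (A \ {0}) := hA.diff (measurableSet_singleton 0)
  have hdisj : Disjoint (A ∩ {0}) (A \ {0}) :=
    disjoint_sdiff_self_right.mono_left inter_subset_right
  rw [hsplit, measure_union hdisj hmd, measure_union hdisj hmd,
    measure_mono_null inter_subset_right hz1, measure_mono_null inter_subset_right hz2,
    zero_add, zero_add]
  have hcov : A \ {0} = ⋃ x : {q : ℚ // ((q:ℝ) ∈ 𝒥)}, ((A \ {0}) ∩ Ioc 0 ((x:ℚ):ℝ)) := by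
    apply Subset.antisymm
    · intro a ha
      have haJ : a ∈ 𝒥 := hAJ ha.1
      have hane : a ≠ 0 := by simpa using ha.2
      have ha0 : 0 < a := lt_of_le_of_ne ((hJ a).1 haJ).1 (Ne.symm hane)
      have h2 : 0 < P {ω | a < Tt ω} := ((hJ a).1 haJ).2
      have hU : {ω | a < Tt ω} = ⋃ n : ℕ, {ω | a + 1/(n+1) ≤ Tt ω} := by
        ext ω
        simp only [mem_setOf_eq, mem_iUnion]
        constructor
        · intro h
          obtain ⟨n, hn⟩ := exists_nat_one_div_lt (sub_pos.2 h)
          exact ⟨n, by push_cast at hn ⊢; linarith⟩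
        · rintro ⟨n, hn⟩
          have hp : 0 < 1/((n:ℝ)+1) := by positivity
          linarith
      have h3 : ∃ n : ℕ, 0 < P {ω | a + 1/(n+1) ≤ Tt ω} := by
        by_contra hcon
        push_neg at hcon
        have h4 : P (⋃ n : ℕ, {ω | a + 1/(n+1) ≤ Tt ω}) = 0 :=
          measure_iUnion_null (fun n => le_antisymm (hcon n) zero_le)
        rw [hU, h4] at h2
        exact lt_irrefl 0 h2
      obtain ⟨n, hn⟩ := h3
      have hlt : a < a + 1/((n:ℝ)+1) := by
        have hp : 0 < 1/((n:ℝ)+1) := by positivity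
        linarith
      obtain ⟨q, hq1, hq2⟩ := exists_rat_btwn hlt
      have hqJ : ((q:ℚ):ℝ) ∈ 𝒥 := (hJ q).2 ⟨le_of_lt (lt_trans ha0 hq1),
        lt_of_lt_of_le hn (measure_mono (fun ω h => lt_of_lt_of_le hq2 h))⟩
      exact mem_iUnion.2 ⟨⟨q, hqJ⟩, ha, ha0, hq1.le⟩
    · exact iUnion_subset (fun x => inter_subset_left)
  have hdir : Directed (· ⊆ ·)
      (fun x : {q : ℚ // ((q:ℝ) ∈ 𝒥)} => (A \ {0}) ∩ Ioc 0 ((x:ℚ):ℝ)) := by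
    intro x y
    have hm : ((max x.1 y.1 : ℚ) : ℝ) ∈ 𝒥 := by
      rcases le_total x.1 y.1 with h | h
      · rw [max_eq_right h]; exact y.2
      · rw [max_eq_left h]; exact x.2
    refine ⟨⟨max x.1 y.1, hm⟩, inter_subset_inter_right _ (Ioc_subset_Ioc_right ?_),
      inter_subset_inter_right _ (Ioc_subset_Ioc_right ?_)⟩
    · exact_mod_cast le_max_left x.1 y.1
    · exact_mod_cast le_max_right x.1 y.1
  rw [hcov, hdir.measure_iUnion, hdir.measure_iUnion]
  refine iSup_congr (fun x => ?_)
  have hxJ : ((x : ℚ) : ℝ) ∈ 𝒥 := x.2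
  have hmeas : MeasurableSet ((A \ {0}) ∩ Ioc 0 ((x:ℚ):ℝ)) := hmd.inter measurableSet_Ioc
  rw [hdens _ hxJ j hj1 hjd _ hmeas inter_subset_right, withDensity_apply _ hmeas]
  refine setLIntegral_congr_fun hmeas (fun u hu => ?_)
  have hKIu := hKI _ hxJ u hu.2
  have hup : 0 < P {ω | u ≤ T ω} :=
    lt_of_lt_of_le ((hJ _).1 hxJ).2 (le_trans (hJStt _ u hu.2.2) (hSttStp u))
  have hBfu : B u ≠ ∞ := hBfin _ ((hJ _).1 hxJ).2 u hu.2.2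
  exact (KIcons _ _ _ hKIu hup.ne' (measure_ne_top P _) hBfu).1.symm


lemma backward
    {Ω : Type*} [m0 : MeasurableSpace Ω] (P : Measure Ω) [IsProbabilityMeasure P]
    (d : ℕ) (hd : 1 ≤ d)
    (T Tt : Ω → ℝ) (D Dt : Ω → ℕ)
    (hT : Measurable T) (hTt : Measurable Tt)
    (hD : Measurable D) (hDt : Measurable Dt)
    (hpos : ∀ᵐ ω ∂P, 0 < Tt ω ∧ Tt ω ≤ T ω)
    (hDrange : ∀ ω, 1 ≤ D ω ∧ D ω ≤ d)
    (hDtrange : ∀ ω, Dt ω ≤ d)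
    (hDD : ∀ᵐ ω ∂P, Dt ω = if Tt ω = T ω then D ω else 0)
    (μ μt : ℕ → Measure ℝ)
    (hμ : ∀ j, μ j = Measure.map T (P.restrict {ω | D ω = j}))
    (hμt : ∀ j, μt j = Measure.map Tt (P.restrict {ω | Dt ω = j}))
    (H Ht : ℕ → ℝ → ℝ≥0∞)
    (hH : ∀ j t, H j t = ∫⁻ s in Ioc 0 t, (P {ω | s ≤ T ω})⁻¹ ∂(μ j))
    (hHt : ∀ j t, Ht j t = ∫⁻ s in Ioc 0 t, (P {ω | s ≤ Tt ω})⁻¹ ∂(μt j))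
    (𝒥 : Set ℝ) (h𝒥 : 𝒥 = {t | 0 ≤ t ∧ 0 < P {ω | t < Tt ω}})
    (B : ℝ → ℝ≥0∞)
    (hB : ∀ s, B s = ∫⁻ u in Ico 0 s, (P {ω | u < T ω})⁻¹ ∂(μt 0))
    (hii : ∀ j, 1 ≤ j → j ≤ d → ∀ A : Set ℝ, MeasurableSet A → A ⊆ 𝒥 →
      μt j A = ∫⁻ s in A, (1 - B s) ∂(μ j)) :
    ∀ j, 1 ≤ j → j ≤ d → ∀ t ∈ 𝒥, Ht j t = H j t := by
  have hJ : ∀ x : ℝ, x ∈ 𝒥 ↔ 0 ≤ x ∧ 0 < P {ω | x < Tt ω} := fun x => by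
    rw [h𝒥]; exact Iff.rfl
  have hSttm : Measurable (fun s : ℝ => P {ω | s ≤ Tt ω}) := (anti_le P Tt).measurable
  have hStpm : Measurable (fun s : ℝ => P {ω | s ≤ T ω}) := (anti_le P T).measurable
  have hBeq : B = fun s => ∫⁻ u in Ico 0 s, (P {ω | u < T ω})⁻¹ ∂(μt 0) := funext hB
  have hBmono : Monotone B := hBeq ▸ mono_B (μt 0) _
  have hBmeas : Measurable B := hBmono.measurable
  have h1Banti : Antitone (fun u : ℝ => 1 - B u) :=
    fun _ _ hab => tsub_le_tsub_left (hBmono hab) 1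
  have h1Bmeas : Measurable (fun u : ℝ => 1 - B u) := h1Banti.measurable
  have hμfin : ∀ j, IsFiniteMeasure (μ j) := fun j => by rw [hμ j]; exact map_finite P hT _
  have hμtfin : ∀ j, IsFiniteMeasure (μt j) := fun j => by rw [hμt j]; exact map_finite P hTt _
  haveI hlamP : IsProbabilityMeasure (Measure.map T P) :=
    Measure.isProbabilityMeasure_map hT.aemeasurable
  have hSttStp : ∀ s : ℝ, P {ω | s ≤ Tt ω} ≤ P {ω | s ≤ T ω} := fun s =>
    measure_mono_ae (by filter_upwards [hpos] with ω hω h; exact le_trans h hω.2)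
  have hJStt : ∀ t s : ℝ, s ≤ t → P {ω | t < Tt ω} ≤ P {ω | s ≤ Tt ω} := fun t s hst =>
    measure_mono (fun ω h => le_of_lt (lt_of_le_of_lt hst h))
  have hJSt : ∀ t v : ℝ, v ≤ t → P {ω | t < Tt ω} ≤ P {ω | v < T ω} := fun t v hvt =>
    measure_mono_ae (by
      filter_upwards [hpos] with ω hω h
      exact lt_of_le_of_lt hvt (lt_of_lt_of_le h hω.2))
  have hμt0le1 : ∀ A : Set ℝ, MeasurableSet A → μt 0 A ≤ 1 := fun A hA => by
    rw [hμt 0, Measure.map_apply hTt hA, Measure.restrict_apply (hTt hA)]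
    exact prob_le_one
  have hBub : ∀ t u : ℝ, u ≤ t → B u ≤ (P {ω | t < Tt ω})⁻¹ := by
    intro t u hut
    rw [hB u]
    calc ∫⁻ v in Ico 0 u, (P {ω | v < T ω})⁻¹ ∂(μt 0)
        ≤ ∫⁻ _ in Ico 0 u, (P {ω | t < Tt ω})⁻¹ ∂(μt 0) :=
          setLIntegral_mono' measurableSet_Ico (fun v hv =>
            ENNReal.inv_le_inv.2 (hJSt t v (le_trans hv.2.le hut)))
      _ = (P {ω | t < Tt ω})⁻¹ * μt 0 (Ico 0 u) := setLIntegral_const _ _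
      _ ≤ (P {ω | t < Tt ω})⁻¹ * 1 := mul_le_mul_right (hμt0le1 _ measurableSet_Ico) _
      _ = (P {ω | t < Tt ω})⁻¹ := mul_one _
  have hBfin : ∀ t : ℝ, 0 < P {ω | t < Tt ω} → ∀ u : ℝ, u ≤ t → B u ≠ ∞ := fun t ht u hut =>
    ne_top_of_le_ne_top (ENNReal.inv_ne_top.2 ht.ne') (hBub t u hut)
  have hsum : ∀ (g : ℝ → ℝ≥0∞) (s : ℝ),
      (∀ j' ∈ Finset.Icc 1 d, μt j' (Ioo 0 s) = ∫⁻ u in Ioo 0 s, g u ∂(μ j')) →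
      (∑ j' ∈ Finset.Icc 1 d, Measure.map Tt (P.restrict {ω | Dt ω = j'}) (Ioo 0 s))
        = ∫⁻ u in Ioo 0 s, g u ∂(Measure.map T P) := by
    intro g s hper
    have h1 : ∀ j' ∈ Finset.Icc 1 d,
        Measure.map Tt (P.restrict {ω | Dt ω = j'}) (Ioo 0 s)
          = ∫⁻ u in Ioo 0 s, g u ∂(Measure.map T (P.restrict {ω | D ω = j'})) := fun j' hj' => by
      rw [← hμt j', hper j' hj', hμ j']
    rw [Finset.sum_congr rfl h1, ← lintegral_map_sum P hT hD d hDrange measurableSet_Ioo g]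
  have hEch : ∀ (G : ℝ → ℝ≥0∞) (s : ℝ), 0 < P {ω | s ≤ Tt ω} →
      (∀ j' ∈ Finset.Icc 1 d, μt j' (Ioo 0 s) = ∫⁻ u in Ioo 0 s, G u ∂(μ j')) →
      P {ω | s ≤ T ω} + Measure.map T P (Ioo 0 s)
        = P {ω | s ≤ Tt ω} + P {ω | s ≤ T ω} * B s
          + ∫⁻ u in Ioo 0 s, (B u + G u) ∂(Measure.map T P) := by
    intro G s hs hper
    have hE := echain P hT hTt hD hDt hpos d hDrange hDD G s hs (hsum G s hper)
    simp only [← hμt] at hE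
    simp only [← hB] at hE
    exact hE
  have hJIoc : ∀ t, t ∈ 𝒥 → Ioc (0:ℝ) t ⊆ 𝒥 := by
    intro t ht u hu
    exact (hJ u).2 ⟨hu.1.le, lt_of_lt_of_le ((hJ t).1 ht).2
      (measure_mono (fun ω h => lt_of_le_of_lt hu.2 h))⟩
  have hGii : ∀ s, s ∈ 𝒥 → ∀ j' ∈ Finset.Icc 1 d, μt j' (Ioo 0 s)
      = ∫⁻ u in Ioo 0 s, (1 - B u) ∂(μ j') := by
    intro s hs j' hj'
    exact hii j' (Finset.mem_Icc.1 hj').1 (Finset.mem_Icc.1 hj').2 _ measurableSet_Ioo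
      ((Ioo_subset_Ioc_self).trans (hJIoc s hs))
  have hsJpos : ∀ s, s ∈ 𝒥 → 0 < P {ω | s ≤ Tt ω} := fun s hs =>
    lt_of_lt_of_le ((hJ s).1 hs).2 (measure_mono (fun ω h => le_of_lt (show s < Tt ω from h)))
  have hEq : ∀ s, s ∈ 𝒥 →
      P {ω | s ≤ T ω} + Measure.map T P (Ioo 0 s)
        = P {ω | s ≤ Tt ω} + P {ω | s ≤ T ω} * B s
          + ∫⁻ u in Ioo 0 s, (B u + (1 - B u)) ∂(Measure.map T P) := fun s hs =>
    hEch (fun u => 1 - B u) s (hsJpos s hs) (hGii s hs)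
  have hStpJ : ∀ s, s ∈ 𝒥 → 0 < P {ω | s ≤ T ω} := fun s hs =>
    lt_of_lt_of_le (hsJpos s hs) (hSttStp s)
  have hpass1 : ∀ s, s ∈ 𝒥 →
      P {ω | s ≤ Tt ω} + P {ω | s ≤ T ω} * B s ≤ P {ω | s ≤ T ω} := by
    intro s hs
    have h1 := hEq s hs
    have h2 : Measure.map T P (Ioo 0 s)
        ≤ ∫⁻ u in Ioo 0 s, (B u + (1 - B u)) ∂(Measure.map T P) := by
      calc Measure.map T P (Ioo 0 s) = ∫⁻ _ in Ioo 0 s, 1 ∂(Measure.map T P) :=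
            (setLIntegral_one _).symm
        _ ≤ _ := setLIntegral_mono' measurableSet_Ioo (fun u _ => by
              rw [add_comm]; exact le_tsub_add)
    have h3 : P {ω | s ≤ Tt ω} + P {ω | s ≤ T ω} * B s + Measure.map T P (Ioo 0 s)
        ≤ P {ω | s ≤ T ω} + Measure.map T P (Ioo 0 s) := by
      rw [h1]
      exact add_le_add_right h2 _
    exact ENNReal.le_of_add_le_add_right (measure_ne_top _ _) h3
  have hB1 : ∀ s, s ∈ 𝒥 → B s ≤ 1 := by
    intro s hs
    have h1 : P {ω | s ≤ T ω} * B s ≤ P {ω | s ≤ T ω} * 1 := by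
      rw [mul_one]
      exact le_trans le_add_self (hpass1 s hs)
    exact (ENNReal.mul_le_mul_iff_right (hStpJ s hs).ne' (measure_ne_top P _)).1 h1
  have hKI : ∀ s, s ∈ 𝒥 →
      P {ω | s ≤ T ω} = P {ω | s ≤ Tt ω} + P {ω | s ≤ T ω} * B s := by
    intro s hs
    have h1 := hEq s hs
    have h2 : ∫⁻ u in Ioo 0 s, (B u + (1 - B u)) ∂(Measure.map T P)
        = Measure.map T P (Ioo 0 s) := by
      have hc : ∀ u ∈ Ioo (0:ℝ) s, B u + (1 - B u) = 1 := by
        intro u hu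
        have huJ : u ∈ 𝒥 := hJIoc s hs ⟨hu.1, hu.2.le⟩
        rw [add_comm]
        exact tsub_add_cancel_of_le (hB1 u huJ)
      rw [setLIntegral_congr_fun measurableSet_Ioo hc,
        setLIntegral_one]
    rw [h2] at h1
    have h3 : Measure.map T P (Ioo 0 s) + P {ω | s ≤ T ω}
        = Measure.map T P (Ioo 0 s) + (P {ω | s ≤ Tt ω} + P {ω | s ≤ T ω} * B s) := by
      rw [add_comm (Measure.map T P (Ioo 0 s)), h1, add_comm]
    exact (ENNReal.add_right_inj (measure_ne_top _ _)).1 h3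
  intro j hj1 hjd t ht
  haveI := hμtfin j; haveI := hμfin j
  rw [hHt j t, hH j t]
  have hres : (μt j).restrict (Ioc 0 t)
      = (((μ j).withDensity (fun u => 1 - B u)).restrict (Ioc 0 t)) := by
    refine Measure.ext (fun A hA => ?_)
    rw [Measure.restrict_apply hA, Measure.restrict_apply hA,
      hii j hj1 hjd _ (hA.inter measurableSet_Ioc)
        ((inter_subset_right).trans (hJIoc t ht)),
      withDensity_apply _ (hA.inter measurableSet_Ioc)]
  calc ∫⁻ s in Ioc 0 t, (P {ω | s ≤ Tt ω})⁻¹ ∂(μt j)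
      = ∫⁻ s, (P {ω | s ≤ Tt ω})⁻¹
          ∂(((μ j).restrict (Ioc 0 t)).withDensity (fun u => 1 - B u)) := by
        show ∫⁻ s, _ ∂((μt j).restrict (Ioc 0 t)) = _
        rw [hres, restrict_withDensity measurableSet_Ioc]
    _ = ∫⁻ s in Ioc 0 t, ((fun u => 1 - B u) * fun s => (P {ω | s ≤ Tt ω})⁻¹) s ∂(μ j) :=
        lintegral_withDensity_eq_lintegral_mul _ h1Bmeas hSttm.inv
    _ = ∫⁻ s in Ioc 0 t, (P {ω | s ≤ T ω})⁻¹ ∂(μ j) := by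
        refine setLIntegral_congr_fun measurableSet_Ioc
          (fun u hu => ?_)
        have huJ : u ∈ 𝒥 := hJIoc t ht hu
        have h1B := (KIcons _ _ _ (hKI u huJ) (hStpJ u huJ).ne' (measure_ne_top P _)
          (hBfin u ((hJ u).1 huJ).2 u le_rfl)).1
        show (1 - B u) * (P {ω | u ≤ Tt ω})⁻¹ = _
        rw [h1B, mul_right_comm,
          ENNReal.mul_inv_cancel (hsJpos u huJ).ne' (measure_ne_top P _), one_mul]


end IdForces

/-- Proposition 2 (parts (2.1) ⟺ (2.4)): identity of forces of mortality is equivalent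
to the constant-sum property (in integrated form). -/
theorem identity_of_forces_iff_constant_sum
    {Ω : Type*} [m0 : MeasurableSpace Ω] (P : Measure Ω) [IsProbabilityMeasure P]
    (d : ℕ) (hd : 1 ≤ d)
    (T Tt : Ω → ℝ) (D Dt : Ω → ℕ)
    (hT : Measurable T) (hTt : Measurable Tt)
    (hD : Measurable D) (hDt : Measurable Dt)
    (hpos : ∀ᵐ ω ∂P, 0 < Tt ω ∧ Tt ω ≤ T ω)
    (hDrange : ∀ ω, 1 ≤ D ω ∧ D ω ≤ d)
    (hDtrange : ∀ ω, Dt ω ≤ d)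
    (hDD : ∀ᵐ ω ∂P, Dt ω = if Tt ω = T ω then D ω else 0)
    (μ μt : ℕ → Measure ℝ)
    (hμ : ∀ j, μ j = Measure.map T (P.restrict {ω | D ω = j}))
    (hμt : ∀ j, μt j = Measure.map Tt (P.restrict {ω | Dt ω = j}))
    (H Ht : ℕ → ℝ → ℝ≥0∞)
    (hH : ∀ j t, H j t = ∫⁻ s in Ioc 0 t, (P {ω | s ≤ T ω})⁻¹ ∂(μ j))
    (hHt : ∀ j t, Ht j t = ∫⁻ s in Ioc 0 t, (P {ω | s ≤ Tt ω})⁻¹ ∂(μt j))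
    (𝒥 : Set ℝ) (h𝒥 : 𝒥 = {t | 0 ≤ t ∧ 0 < P {ω | t < Tt ω}})
    -- B(s) = ∫_{[0,s)} S(u)⁻¹ μ̃₀(du)
    (B : ℝ → ℝ≥0∞)
    (hB : ∀ s, B s = ∫⁻ u in Ico 0 s, (P {ω | u < T ω})⁻¹ ∂(μt 0)) :
    -- (i) identity of forces of mortality
    (∀ j, 1 ≤ j → j ≤ d → ∀ t ∈ 𝒥, Ht j t = H j t) ↔
    -- (ii) the constant-sum property:
    -- μ̃_j(A) = ∫_A (1 − B(s)) μ_j(ds) for all Borel A ⊆ 𝒥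
    (∀ j, 1 ≤ j → j ≤ d → ∀ A : Set ℝ, MeasurableSet A → A ⊆ 𝒥 →
      μt j A = ∫⁻ s in A, (1 - B s) ∂(μ j)) := by
  constructor
  · intro hi
    exact IdForces.forward P d hd T Tt D Dt hT hTt hD hDt hpos hDrange hDtrange hDD
      μ μt hμ hμt H Ht hH hHt 𝒥 h𝒥 B hB hi
  · intro hii
    exact IdForces.backward P d hd T Tt D Dt hT hTt hD hDt hpos hDrange hDtrange hDD
      μ μt hμ hμt H Ht hH hHt 𝒥 h𝒥 B hB hii
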